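/- Let A be a field. Let g₀ be a formal Laurent series in u with coefficients in A (i.e. with only finitely many nonzero coefficients in negative degrees) and let g∞ be a formal Laurent series in u⁻¹ with coefficients in A (i.e. with only finitely many nonzero coefficients in positive degrees). Suppose there are finitely many pairwise distinct nonzero elements a₁, …, a_r ∈ A, multiplicities n₁, …, n_r ≥ 1, and coefficients c_{i,ν} ∈ A for 0 ≤ ν ≤ nᵢ − 1, such that for every n ∈ ℤ the coefficient of uⁿ in g₀ minus the coefficient of uⁿ in g∞ equals Σ_{i=1}^{r} Σ_{ν=0}^{nᵢ−1} c_{i,ν} · (coefficient of uⁿ in δ^{(ν)}(u/aᵢ)). Then there exists a rational function g ∈ A(u) such that: (1) g · Π_{i=1}^{r}(u − aᵢ)^{nᵢ} is a Laurent polynomial in u (so the divisor of poles of g away from 0 and ∞ is bounded by Σ nᵢ·(aᵢ)); (2) the Laurent-series expansion of g at u = 0 equals g₀; and (3) the expansion of g at u = ∞, as a formal series in u⁻¹, equals g∞. -/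

import Mathlib

open scoped LaurentSeries Polynomial

/-- The coefficient of `uⁿ` in the `ν`-th formal derivative of the delta function
`δ(u/a) = Σ_{m∈ℤ} (u/a)^m`, namely `a^{-(n+ν)} · (n+ν)(n+ν-1)⋯(n+1)`. -/
noncomputable def deltaDerivCoeff {A : Type} [Field A] (a : A) (ν : ℕ) (n : ℤ) : A :=
  a ^ (-(n + (ν : ℤ))) * ∏ j ∈ Finset.range ν, ((n : A) + (j : A) + 1)

namespace RatFunc

variable {F : Type} [Field F]

noncomputable def coeAlgHom (F : Type) [Field F] : RatFunc F →+* LaurentSeries F :=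
  algebraMap (RatFunc F) (LaurentSeries F)

lemma coe_def (f : RatFunc F) : (f : LaurentSeries F) = coeAlgHom F f := rfl

lemma coe_mul (f g : RatFunc F) : ((f * g : RatFunc F) : LaurentSeries F) = f * g := map_mul _ _ _

lemma coe_add (f g : RatFunc F) : ((f + g : RatFunc F) : LaurentSeries F) = f + g := map_add _ _ _

lemma coe_sub (f g : RatFunc F) : ((f - g : RatFunc F) : LaurentSeries F) = f - g := map_sub _ _ _

lemma coe_div (f g : RatFunc F) : ((f / g : RatFunc F) : LaurentSeries F) = f / g :=
  map_div₀ _ _ _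

lemma coe_pow (f : RatFunc F) (n : ℕ) : ((f ^ n : RatFunc F) : LaurentSeries F) = f ^ n :=
  map_pow _ _ _

lemma coe_one : ((1 : RatFunc F) : LaurentSeries F) = 1 := map_one _

lemma coe_C (c : F) : ((C c : RatFunc F) : LaurentSeries F) = HahnSeries.C c := by
  rw [← algebraMap_C, ← IsScalarTower.algebraMap_apply]
  simp

end RatFunc

namespace RFDD

lemma auxNat_prod (m ν : ℕ) :
    ∏ j ∈ Finset.range ν, (m + j + 1) = Nat.factorial ν * (m + ν).choose ν := by
  induction ν with
  | zero => simp
  | succ ν ih =>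
      rw [Finset.prod_range_succ, ih, Nat.factorial_succ]
      have h := Nat.add_one_mul_choose_eq (m + ν) ν
      calc Nat.factorial ν * (m + ν).choose ν * (m + ν + 1)
          = Nat.factorial ν * ((m + ν + 1) * (m + ν).choose ν) := by ring
        _ = Nat.factorial ν * ((m + ν + 1).choose (ν + 1) * (ν + 1)) := by rw [h]
        _ = (ν + 1) * Nat.factorial ν * (m + (ν + 1)).choose (ν + 1) := by ring_nf

lemma auxNat_sum (n ν : ℕ) :
    ∑ k ∈ Finset.range (n + 1), (k + ν).choose ν = (n + ν + 1).choose (ν + 1) := by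
  induction n with
  | zero => simp
  | succ n ih =>
      rw [Finset.sum_range_succ, ih]
      have e1 : n + 1 + ν + 1 = (n + ν + 1) + 1 := by ring
      have e2 : n + 1 + ν = n + ν + 1 := by ring
      rw [e1, e2, Nat.choose_succ_succ (n + ν + 1) ν]
      exact add_comm _ _

variable {A : Type} [Field A]

noncomputable def expS (a : A) : PowerSeries A := PowerSeries.mk fun n => a⁻¹ ^ (n + 1)

lemma expS_mul (a : A) (ha : a ≠ 0) :
    (PowerSeries.C a - PowerSeries.X) * expS a = 1 := by
  ext n
  rw [sub_mul, map_sub]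
  cases n with
  | zero =>
      simp [expS, PowerSeries.coeff_zero_eq_constantCoeff, ha]
  | succ n =>
      rw [PowerSeries.coeff_C_mul, PowerSeries.coeff_succ_X_mul]
      simp only [expS, PowerSeries.coeff_mk, PowerSeries.coeff_one, Nat.succ_ne_zero, if_false]
      rw [pow_succ]
      field_simp
      ring

lemma coeff_expS_pow (a : A) (ν n : ℕ) :
    PowerSeries.coeff n (expS a ^ (ν + 1)) =
      a⁻¹ ^ (n + ν + 1) * ((n + ν).choose ν : A) := by
  induction ν generalizing n with
  | zero => simp [expS]
  | succ ν ih =>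
      rw [pow_succ, PowerSeries.coeff_mul]
      rw [Finset.Nat.sum_antidiagonal_eq_sum_range_succ_mk]
      have : ∀ k ∈ Finset.range (n + 1),
          PowerSeries.coeff k (expS a ^ (ν + 1)) *
            PowerSeries.coeff (n - k) (expS a)
          = a⁻¹ ^ (n + ν + 2) * ((k + ν).choose ν : A) := by
        intro k hk
        rw [Finset.mem_range] at hk
        rw [ih, expS, PowerSeries.coeff_mk]
        have e : n + ν + 2 = (k + ν + 1) + (n - k + 1) := by omega
        rw [e, pow_add]
        ring
      rw [Finset.sum_congr rfl this, ← Finset.mul_sum]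
      rw [← Nat.cast_sum, auxNat_sum n ν]
      norm_num
      ring_nf

lemma coeff_ofPowerSeries (s : PowerSeries A) (n : ℤ) :
    (HahnSeries.ofPowerSeries ℤ A s).coeff n =
      if n < 0 then 0 else PowerSeries.coeff n.natAbs s := by
  cases n with
  | ofNat m =>
      rw [Int.ofNat_eq_coe, LaurentSeries.coeff_coe_powerSeries,
        if_neg (Int.natCast_nonneg _).not_gt, Int.natAbs_natCast]
  | negSucc m =>
      rw [if_pos (Int.negSucc_lt_zero _), HahnSeries.ofPowerSeries_apply,
        HahnSeries.embDomain_notin_range]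
      simp only [Set.mem_range, RelEmbedding.coe_mk, Function.Embedding.coeFn_mk]
      rintro ⟨k, hk⟩
      exact absurd (hk ▸ Int.natCast_nonneg k) (Int.negSucc_lt_zero m).not_ge

noncomputable def E₀ (a : A) (ν : ℕ) (n : ℤ) : A :=
  if n < 0 then 0 else a⁻¹ ^ (n.natAbs + ν + 1) * ((n.natAbs + ν).choose ν : A)

lemma coe_CX (a : A) :
    (((RatFunc.C a - RatFunc.X : RatFunc A) : LaurentSeries A)) =
      HahnSeries.ofPowerSeries ℤ A (PowerSeries.C a - PowerSeries.X) := by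
  rw [RatFunc.coe_sub, RatFunc.coe_C, RatFunc.coe_X, map_sub, PowerSeries.coe_C,
    PowerSeries.coe_X]

lemma coe_T (a : A) (ha : a ≠ 0) (ν : ℕ) :
    ((((RatFunc.C a - RatFunc.X) ^ (ν + 1))⁻¹ : RatFunc A) : LaurentSeries A) =
      HahnSeries.ofPowerSeries ℤ A (expS a ^ (ν + 1)) := by
  have h1 : ((((RatFunc.C a - RatFunc.X) ^ (ν + 1) : RatFunc A)) : LaurentSeries A) *
      HahnSeries.ofPowerSeries ℤ A (expS a ^ (ν + 1)) = 1 := by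
    rw [RatFunc.coe_pow, coe_CX, ← map_pow, ← map_mul, ← mul_pow, expS_mul a ha, one_pow,
      map_one]
  rw [← one_div, RatFunc.coe_div, RatFunc.coe_one]
  rw [mul_comm] at h1
  exact (eq_one_div_of_mul_eq_one_left h1).symm

lemma coe_T_coeff (a : A) (ha : a ≠ 0) (ν : ℕ) (n : ℤ) :
    ((((RatFunc.C a - RatFunc.X) ^ (ν + 1))⁻¹ : RatFunc A) : LaurentSeries A).coeff n =
      E₀ a ν n := by
  rw [coe_T a ha ν, coeff_ofPowerSeries, E₀]
  split
  · rfl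
  · rw [coeff_expS_pow]

lemma single_int_inv (s : ℤ) :
    (HahnSeries.single s (1 : A))⁻¹ = HahnSeries.single (-s) (1 : A) := by
  refine inv_eq_of_mul_eq_one_right ?_
  rw [HahnSeries.single_mul_single, add_neg_cancel, one_mul, HahnSeries.single_zero_one]

lemma single_int_zpow (t : ℤ) :
    (HahnSeries.single (1 : ℤ) (1 : A)) ^ t = HahnSeries.single t (1 : A) := by
  have hpow : ∀ m : ℕ, (HahnSeries.single (1 : ℤ) (1 : A)) ^ m
      = HahnSeries.single (m : ℤ) (1 : A) := by
    intro m
    rw [HahnSeries.single_pow, one_pow, nsmul_eq_mul, mul_one]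
  cases t with
  | ofNat m => rw [Int.ofNat_eq_coe, zpow_natCast, hpow]
  | negSucc m =>
      rw [zpow_negSucc, hpow, single_int_inv]
      have : (-(((m : ℕ) + 1 : ℕ)) : ℤ) = Int.negSucc m := by
        rw [Int.negSucc_eq]; push_cast; ring
      rw [this]

lemma coe_single (c : A) (t : ℤ) :
    ((RatFunc.C c * RatFunc.X ^ t : RatFunc A) : LaurentSeries A) =
      HahnSeries.single t c := by
  rw [RatFunc.coe_mul, RatFunc.coe_C, RatFunc.coe_def, map_zpow₀, ← RatFunc.coe_def,
    RatFunc.coe_X, single_int_zpow]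
  rw [HahnSeries.C_apply, HahnSeries.single_mul_single, zero_add, mul_one]

lemma laurent_coeff_sum {β : Type*} (s : Finset β) (f : β → LaurentSeries A) (n : ℤ) :
    (∑ b ∈ s, f b).coeff n = ∑ b ∈ s, (f b).coeff n :=
  map_sum (HahnSeries.coeff.addMonoidHom n) f s

lemma C_mul_coeff (w : A) (x : LaurentSeries A) (n : ℤ) :
    (HahnSeries.C w * x).coeff n = w * x.coeff n := by
  rw [HahnSeries.C_apply, ← add_zero n, HahnSeries.coeff_single_mul_add, add_zero]

noncomputable def φp : A[X] →+* RatFunc A :=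
  Polynomial.eval₂RingHom RatFunc.C (RatFunc.X)⁻¹

lemma coe_X_inv : ((RatFunc.X⁻¹ : RatFunc A) : LaurentSeries A) =
    HahnSeries.single (-1 : ℤ) 1 := by
  rw [RatFunc.coe_def, map_inv₀, ← RatFunc.coe_def, RatFunc.coe_X, single_int_inv]

lemma coe_φp_coeff (p : A[X]) (k : ℕ) :
    ((φp p : RatFunc A) : LaurentSeries A).coeff (-(k : ℤ)) = p.coeff k := by
  have h : ((φp p : RatFunc A) : LaurentSeries A)
      = Polynomial.eval₂ ((RatFunc.coeAlgHom A).comp RatFunc.C)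
          (HahnSeries.single (-1 : ℤ) 1) p := by
    rw [show ((φp p : RatFunc A) : LaurentSeries A)
        = (RatFunc.coeAlgHom A) (φp p) from rfl]
    rw [show φp p = Polynomial.eval₂ RatFunc.C (RatFunc.X)⁻¹ p from rfl]
    rw [Polynomial.hom_eval₂]
    congr 1
    exact coe_X_inv
  rw [h, Polynomial.eval₂_eq_sum_range]
  have hterm : ∀ i : ℕ,
      ((RatFunc.coeAlgHom A).comp RatFunc.C) (p.coeff i) *
        (HahnSeries.single (-1 : ℤ) 1) ^ i = HahnSeries.single (-(i : ℤ)) (p.coeff i) := by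
    intro i
    rw [RingHom.comp_apply]
    rw [show (RatFunc.coeAlgHom A) (RatFunc.C (p.coeff i))
        = ((RatFunc.C (p.coeff i) : RatFunc A) : LaurentSeries A) from rfl]
    rw [RatFunc.coe_C, HahnSeries.single_pow, one_pow, HahnSeries.C_apply,
      HahnSeries.single_mul_single, zero_add, mul_one, nsmul_eq_mul, mul_neg_one]
  simp only [hterm]
  rw [laurent_coeff_sum]
  by_cases hk : k < p.natDegree + 1
  · rw [Finset.sum_eq_single k]
    · rw [HahnSeries.coeff_single_same]
    · intro b _ hb
      rw [HahnSeries.coeff_single]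
      rw [if_neg]
      intro hh
      exact hb (by omega)
    · intro h'
      exact absurd (Finset.mem_range.2 hk) h'
  · rw [Finset.sum_eq_zero, Polynomial.coeff_eq_zero_of_natDegree_lt (by omega)]
    intro b hb
    rw [Finset.mem_range] at hb
    rw [HahnSeries.coeff_single, if_neg]
    intro hh
    have : b = k := by omega
    omega

lemma φp_ne_zero {p : A[X]} (hp : p ≠ 0) : φp p ≠ 0 := by
  intro h
  apply hp
  ext k
  rw [← coe_φp_coeff p k, h]
  simp

lemma hφ_mem : nonZeroDivisors A[X] ≤ Submonoid.comap (φp (A := A)) (nonZeroDivisors (RatFunc A)) := by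
  intro p hp
  rw [Submonoid.mem_comap]
  exact mem_nonZeroDivisors_of_ne_zero (φp_ne_zero (nonZeroDivisors.ne_zero hp))

noncomputable def Φ : RatFunc A →+* RatFunc A :=
  RatFunc.liftRingHom φp hφ_mem

lemma Φ_algebraMap (p : A[X]) : Φ (algebraMap A[X] (RatFunc A) p) = φp p := by
  have := RatFunc.liftRingHom_apply_div (K := A) φp hφ_mem p 1
  rw [map_one, div_one, map_one, div_one] at this
  exact this

lemma Φ_eq_eval (g : RatFunc A) :
    RatFunc.eval (algebraMap A (RatFunc A)) (RatFunc.X)⁻¹ g = Φ g := by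
  conv_rhs => rw [← RatFunc.num_div_denom g]
  rw [Φ, RatFunc.liftRingHom_apply_div]
  rw [RatFunc.eval]
  rw [RatFunc.algebraMap_eq_C]
  rfl

lemma Φ_X : Φ (RatFunc.X : RatFunc A) = (RatFunc.X)⁻¹ := by
  rw [← RatFunc.algebraMap_X, Φ_algebraMap]
  simp [φp]

lemma Φ_C (c : A) : Φ (RatFunc.C c) = RatFunc.C c := by
  rw [← RatFunc.algebraMap_C, Φ_algebraMap]
  simp [φp]

lemma CX_ne_zero (b : A) : (RatFunc.C b - RatFunc.X : RatFunc A) ≠ 0 := by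
  rw [← RatFunc.algebraMap_C, ← RatFunc.algebraMap_X, ← map_sub]
  apply RatFunc.algebraMap_ne_zero
  intro h
  have := congrArg (Polynomial.coeff · 1) h
  simp [Polynomial.coeff_X_one] at this

lemma Φ_T (a : A) (ha : a ≠ 0) (ν : ℕ) :
    Φ (((RatFunc.C a - RatFunc.X) ^ (ν + 1))⁻¹ : RatFunc A) =
      RatFunc.C ((-1 : A) ^ (ν + 1) * a⁻¹ ^ (ν + 1)) * RatFunc.X ^ ((ν + 1 : ℕ) : ℤ) *
        ((RatFunc.C a⁻¹ - RatFunc.X) ^ (ν + 1))⁻¹ := by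
  rw [map_inv₀, map_pow, map_sub, Φ_C, Φ_X]
  refine inv_eq_of_mul_eq_one_left ?_
  have hX : (RatFunc.X : RatFunc A) ≠ 0 := RatFunc.X_ne_zero
  have h1 : RatFunc.C a * RatFunc.C a⁻¹ = 1 := by
    rw [← map_mul, mul_inv_cancel₀ ha, map_one]
  have key : RatFunc.C a - RatFunc.X⁻¹ =
      (- RatFunc.C a) * (RatFunc.C a⁻¹ - RatFunc.X) * RatFunc.X⁻¹ := by
    calc RatFunc.C a - RatFunc.X⁻¹
        = (RatFunc.C a * RatFunc.X - 1) * RatFunc.X⁻¹ := by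
          rw [sub_mul, mul_assoc, mul_inv_cancel₀ hX, mul_one, one_mul]
      _ = (RatFunc.C a * RatFunc.X - RatFunc.C a * RatFunc.C a⁻¹) * RatFunc.X⁻¹ := by rw [h1]
      _ = (- RatFunc.C a) * (RatFunc.C a⁻¹ - RatFunc.X) * RatFunc.X⁻¹ := by ring
  rw [key, mul_pow, mul_pow]
  have hT' : ((RatFunc.C a⁻¹ - RatFunc.X : RatFunc A)) ^ (ν + 1) ≠ 0 :=
    pow_ne_zero _ (CX_ne_zero a⁻¹)
  have hXz : (RatFunc.X : RatFunc A) ^ ((ν + 1 : ℕ) : ℤ) * (RatFunc.X⁻¹) ^ (ν + 1) = 1 := by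
    rw [inv_pow, zpow_natCast, mul_inv_cancel₀ (pow_ne_zero _ hX)]
  have hC : RatFunc.C ((-1 : A) ^ (ν + 1) * a⁻¹ ^ (ν + 1)) * (- RatFunc.C a) ^ (ν + 1)
      = 1 := by
    have hneg : (- RatFunc.C a) = RatFunc.C (-a) := by rw [map_neg]
    rw [hneg, ← map_pow, ← map_mul]
    have h2 : (-1 : A) ^ (ν + 1) * a⁻¹ ^ (ν + 1) * (-a) ^ (ν + 1) = 1 := by
      rw [← mul_pow, ← mul_pow, show (-1 : A) * a⁻¹ * -a = a⁻¹ * a by ring,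
        inv_mul_cancel₀ ha, one_pow]
    rw [h2, map_one]
  calc RatFunc.C ((-1 : A) ^ (ν + 1) * a⁻¹ ^ (ν + 1)) * RatFunc.X ^ ((ν + 1 : ℕ) : ℤ) *
        ((RatFunc.C a⁻¹ - RatFunc.X) ^ (ν + 1))⁻¹ *
        ((- RatFunc.C a) ^ (ν + 1) * (RatFunc.C a⁻¹ - RatFunc.X) ^ (ν + 1) *
          RatFunc.X⁻¹ ^ (ν + 1))
      = (RatFunc.C ((-1 : A) ^ (ν + 1) * a⁻¹ ^ (ν + 1)) * (- RatFunc.C a) ^ (ν + 1)) *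
        (RatFunc.X ^ ((ν + 1 : ℕ) : ℤ) * (RatFunc.X⁻¹) ^ (ν + 1)) *
        (((RatFunc.C a⁻¹ - RatFunc.X) ^ (ν + 1))⁻¹ *
          (RatFunc.C a⁻¹ - RatFunc.X) ^ (ν + 1)) := by ring
    _ = 1 := by rw [hC, hXz, inv_mul_cancel₀ hT', mul_one, mul_one]

lemma ΦT_coeff (a : A) (ha : a ≠ 0) (ν : ℕ) (n : ℤ) :
    (((RatFunc.C ((-1 : A) ^ (ν + 1) * a⁻¹ ^ (ν + 1)) * RatFunc.X ^ ((ν + 1 : ℕ) : ℤ) *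
        ((RatFunc.C a⁻¹ - RatFunc.X) ^ (ν + 1))⁻¹ : RatFunc A)) : LaurentSeries A).coeff n =
      (-1 : A) ^ (ν + 1) * a⁻¹ ^ (ν + 1) * E₀ a⁻¹ ν (n - (ν + 1)) := by
  rw [RatFunc.coe_mul, coe_single]
  have : n = (n - ((ν : ℤ) + 1)) + ((ν + 1 : ℕ) : ℤ) := by push_cast; ring
  rw [this, HahnSeries.coeff_single_mul_add, coe_T_coeff a⁻¹ (inv_ne_zero ha) ν]
  push_cast
  ring_nf
lemma termKey (a : A) (ha : a ≠ 0) (cc : A) (ν : ℕ) (n : ℤ) :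
    (cc * (Nat.factorial ν : A) * a) * E₀ a ν n -
      (cc * (Nat.factorial ν : A) * a) *
        ((-1 : A) ^ (ν + 1) * a⁻¹ ^ (ν + 1) * E₀ a⁻¹ ν (-n - (ν + 1)))
    = cc * deltaDerivCoeff a ν n := by
  rw [deltaDerivCoeff]
  by_cases h1 : n < 0
  · by_cases h2 : (-n - (ν + 1) : ℤ) < 0
    · -- both zero, product has a zero factor
      rw [E₀, if_pos h1, E₀, if_pos h2, mul_zero, mul_zero, mul_zero, sub_zero]
      have hj : (-n - 1).natAbs < ν := by omega
      rw [Finset.prod_eq_zero (Finset.mem_range.2 hj) (by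
        have hj0 : (((-n - 1).natAbs : ℕ) : ℤ) = -n - 1 := by omega
        have hcast : ((((-n - 1).natAbs : ℕ)) : A) = ((-n - 1 : ℤ) : A) := by
          rw [← hj0]; exact (Int.cast_natCast _).symm
        rw [hcast]
        push_cast
        ring)]
      ring
    · -- n ≤ -ν-1
      push_neg at h2
      obtain ⟨m, rfl⟩ : ∃ m : ℕ, n = -((m + ν + 1 : ℕ) : ℤ) :=
        ⟨(-n - (ν + 1)).natAbs, by omega⟩
      set n : ℤ := -((m + ν + 1 : ℕ) : ℤ) with hn
      rw [E₀, if_pos h1, E₀, if_neg (not_lt.2 h2), mul_zero, zero_sub]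
      have harg : (-n - (ν + 1) : ℤ).natAbs = m := by
        simp only [hn]; push_cast; omega
      rw [harg, inv_inv]
      have hz : a ^ (-(n + (ν : ℤ))) = a ^ (m + 1) := by
        rw [show (-(n + (ν : ℤ))) = ((m + 1 : ℕ) : ℤ) by simp only [hn]; push_cast; ring,
          zpow_natCast]
      rw [hz]
      have hprod : ∏ j ∈ Finset.range ν, ((n : A) + (j : A) + 1)
          = (-1 : A) ^ ν * ((Nat.factorial ν * (m + ν).choose ν : ℕ) : A) := by
        rw [← auxNat_prod m ν, Nat.cast_prod,
          ← Finset.prod_range_reflect (fun j => ((m + j + 1 : ℕ) : A)) ν,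
          show ((-1 : A) ^ ν) = ∏ _j ∈ Finset.range ν, (-1 : A) by
            rw [Finset.prod_const, Finset.card_range],
          ← Finset.prod_mul_distrib]
        refine Finset.prod_congr rfl ?_
        intro j hj
        rw [Finset.mem_range] at hj
        have e1 : ((n : A) + (j : A) + 1) = ((n + j + 1 : ℤ) : A) := by push_cast; ring
        have e2 : (n + j + 1 : ℤ) = -((m + (ν - 1 - j) + 1 : ℕ) : ℤ) := by
          simp only [hn]; push_cast [Nat.sub_sub]; omega
        rw [e1, e2]
        push_cast
        ring
      rw [hprod]
      have hfa : a * a⁻¹ ^ (ν + 1) * a ^ (m + ν + 1) = a ^ (m + 1) := by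
        rw [inv_pow]
        field_simp
        ring
      have expand : -(cc * (Nat.factorial ν : A) * a *
            ((-1 : A) ^ (ν + 1) * a⁻¹ ^ (ν + 1) *
              (a ^ (m + ν + 1) * (((m + ν).choose ν : ℕ) : A))))
          = (a * a⁻¹ ^ (ν + 1) * a ^ (m + ν + 1)) *
              ((-1 : A) ^ ν * (cc * (Nat.factorial ν : A) * (((m + ν).choose ν : ℕ) : A))) := by
        rw [pow_succ (-1 : A) ν]
        ring
      rw [expand, hfa]
      push_cast
      ring
  · -- n ≥ 0
    push_neg at h1
    obtain ⟨m, rfl⟩ : ∃ m : ℕ, n = (m : ℤ) := ⟨n.natAbs, by omega⟩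
    have h2 : (-(m : ℤ) - (ν + 1) : ℤ) < 0 := by push_cast; omega
    rw [E₀, if_neg (not_lt.2 h1), E₀, if_pos h2, mul_zero, mul_zero, sub_zero]
    have harg : ((m : ℤ)).natAbs = m := Int.natAbs_natCast m
    rw [harg]
    have hz : a ^ (-(((m : ℤ)) + (ν : ℤ))) = a⁻¹ ^ (m + ν) := by
      rw [show (-(((m : ℤ)) + (ν : ℤ))) = -((m + ν : ℕ) : ℤ) by push_cast; ring,
        zpow_neg, zpow_natCast, inv_pow]
    rw [hz]
    have hprod : ∏ j ∈ Finset.range ν, (((m : ℤ) : A) + (j : A) + 1)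
        = ((Nat.factorial ν * (m + ν).choose ν : ℕ) : A) := by
      rw [← auxNat_prod m ν, Nat.cast_prod]
      refine Finset.prod_congr rfl ?_
      intro j _
      push_cast
      ring
    rw [hprod]
    have hfa : a * a⁻¹ ^ (m + ν + 1) = a⁻¹ ^ (m + ν) := by
      rw [pow_succ, ← mul_assoc]
      field_simp
    calc cc * (Nat.factorial ν : A) * a *
          (a⁻¹ ^ (m + ν + 1) * (((m + ν).choose ν : ℕ) : A))
        = (a * a⁻¹ ^ (m + ν + 1)) *
            (cc * (Nat.factorial ν : A) * (((m + ν).choose ν : ℕ) : A)) := by ring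
      _ = a⁻¹ ^ (m + ν) * (cc * (Nat.factorial ν : A) * (((m + ν).choose ν : ℕ) : A)) := by
          rw [hfa]
      _ = cc * (a⁻¹ ^ (m + ν) * ((Nat.factorial ν * (m + ν).choose ν : ℕ) : A)) := by
          push_cast
          ring_nf

end RFDD


theorem rational_function_from_delta_difference
    (A : Type) [Field A]
    -- the two formal series, given by their coefficient functions
    (g₀ gInf : ℤ → A)
    -- g₀ is a Laurent series in u : finitely many nonzero coefficients in negative degrees
    (h₀ : ∃ N : ℤ, ∀ n : ℤ, n < N → g₀ n = 0)
    -- gInf is a Laurent series in u⁻¹ : finitely many nonzero coefficients in positive degrees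
    (hInf : ∃ N : ℤ, ∀ n : ℤ, N < n → gInf n = 0)
    -- finitely many pairwise distinct nonzero points aᵢ with multiplicities nᵢ ≥ 1
    (r : ℕ) (a : Fin r → A) (ha : Function.Injective a) (ha0 : ∀ i, a i ≠ 0)
    (nmul : Fin r → ℕ) (hn : ∀ i, 1 ≤ nmul i)
    (c : Fin r → ℕ → A)
    -- the difference of the two series is the given combination of derivatives of
    -- delta functions at the aᵢ
    (hdelta : ∀ n : ℤ,
      g₀ n - gInf n = ∑ i, ∑ ν ∈ Finset.range (nmul i), c i ν * deltaDerivCoeff (a i) ν n) :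
    ∃ g : RatFunc A,
      -- (1) the divisor of poles of g away from 0 and ∞ is bounded by Σ nᵢ·(aᵢ):
      -- g · Π (u - aᵢ)^{nᵢ} is a Laurent polynomial
      (∃ (p : Polynomial A) (m : ℕ),
        g * ∏ i, (RatFunc.X - RatFunc.C (a i)) ^ nmul i
          = algebraMap (Polynomial A) (RatFunc A) p / RatFunc.X ^ m) ∧
      -- (2) the expansion of g at u = 0 is g₀
      (∀ n : ℤ, (g : LaurentSeries A).coeff n = g₀ n) ∧
      -- (3) the expansion of g at u = ∞ is gInf : expanding g(1/v) at v = 0 and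
      -- negating exponents gives the coefficients of gInf
      (∀ n : ℤ,
        ((RatFunc.eval (algebraMap A (RatFunc A)) (RatFunc.X⁻¹) g : RatFunc A) :
            LaurentSeries A).coeff n = gInf (-n)) := by
  classical
  obtain ⟨N₀, hN₀⟩ := h₀
  obtain ⟨Ni, hNi⟩ := hInf
  set w : Fin r → ℕ → A := fun i ν => c i ν * (Nat.factorial ν : A) * a i with hw
  set H : RatFunc A := ∑ i, ∑ ν ∈ Finset.range (nmul i),
    RatFunc.C (w i ν) * ((RatFunc.C (a i) - RatFunc.X) ^ (ν + 1))⁻¹ with hH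
  set c₀ : ℤ → A := fun n => ∑ i, ∑ ν ∈ Finset.range (nmul i),
    w i ν * RFDD.E₀ (a i) ν n with hc₀
  set G : ℤ → A := fun n => ∑ i, ∑ ν ∈ Finset.range (nmul i),
    w i ν * ((-1 : A) ^ (ν + 1) * (a i)⁻¹ ^ (ν + 1) * RFDD.E₀ (a i)⁻¹ ν (n - (ν + 1))) with hG
  set d : ℤ → A := fun n => g₀ n - c₀ n with hd
  set N : ℤ := min N₀ 0 with hN
  set M : ℤ := max Ni 0 with hM
  set K : ℕ := (M + 1 - N).toNat with hK
  have hN0 : N ≤ 0 := min_le_right _ _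
  have hM0 : 0 ≤ M := le_max_right _ _
  have hNK : (N : ℤ) + K = M + 1 := by
    rw [hK]; omega
  set P : RatFunc A := ∑ k ∈ Finset.range K,
    RatFunc.C (d (N + k)) * RatFunc.X ^ ((N + (k : ℤ)) : ℤ) with hP
  -- coefficients of H at 0
  have hH0 : ∀ n : ℤ, ((H : LaurentSeries A)).coeff n = c₀ n := by
    intro n
    rw [hH, hc₀, RatFunc.coe_def, map_sum, RFDD.laurent_coeff_sum]
    refine Finset.sum_congr rfl fun i _ => ?_
    rw [map_sum, RFDD.laurent_coeff_sum]
    refine Finset.sum_congr rfl fun ν _ => ?_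
    rw [← RatFunc.coe_def, RatFunc.coe_mul, RatFunc.coe_C, RFDD.C_mul_coeff,
      RFDD.coe_T_coeff (a i) (ha0 i) ν]
  -- coefficients of H at ∞
  have hHinf : ∀ n : ℤ, ((RFDD.Φ H : RatFunc A) : LaurentSeries A).coeff n = G n := by
    intro n
    rw [hH, hG, map_sum, RatFunc.coe_def, map_sum, RFDD.laurent_coeff_sum]
    refine Finset.sum_congr rfl fun i _ => ?_
    rw [map_sum, map_sum, RFDD.laurent_coeff_sum]
    refine Finset.sum_congr rfl fun ν _ => ?_
    rw [map_mul, RFDD.Φ_C, RFDD.Φ_T (a i) (ha0 i) ν, ← RatFunc.coe_def,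
      RatFunc.coe_mul, RatFunc.coe_C, RFDD.C_mul_coeff, RFDD.ΦT_coeff (a i) (ha0 i) ν n]
  -- the key identity
  have hkey : ∀ n : ℤ, c₀ n - G (-n)
      = ∑ i, ∑ ν ∈ Finset.range (nmul i), c i ν * deltaDerivCoeff (a i) ν n := by
    intro n
    rw [hc₀, hG]
    simp only
    rw [← Finset.sum_sub_distrib]
    refine Finset.sum_congr rfl fun i _ => ?_
    rw [← Finset.sum_sub_distrib]
    refine Finset.sum_congr rfl fun ν _ => ?_
    exact RFDD.termKey (a i) (ha0 i) (c i ν) ν n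
  have hd2 : ∀ n : ℤ, d n = gInf n - G (-n) := by
    intro n
    have h1 := hdelta n
    have h2 := hkey n
    rw [hd]
    simp only
    linear_combination h1 - h2
  have hdlow : ∀ n : ℤ, n < N → d n = 0 := by
    intro n h12
    rw [hd]
    simp only
    rw [hN₀ n (by omega), hc₀]
    simp only
    rw [Finset.sum_eq_zero fun i _ => Finset.sum_eq_zero fun ν _ => ?_]
    · ring
    · rw [RFDD.E₀, if_pos (by omega : n < 0), mul_zero]
  have hdhigh : ∀ n : ℤ, M < n → d n = 0 := by
    intro n h12
    rw [hd2 n, hNi n (by omega), hG]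
    simp only
    rw [Finset.sum_eq_zero fun i _ => Finset.sum_eq_zero fun ν _ => ?_]
    · ring
    · rw [RFDD.E₀, if_pos (by omega : -n - ((ν : ℤ) + 1) < 0), mul_zero, mul_zero]
  -- coefficients of P at 0
  have hPcoe : ∀ n : ℤ, ((P : LaurentSeries A)).coeff n = d n := by
    intro n
    rw [hP, RatFunc.coe_def, map_sum, RFDD.laurent_coeff_sum]
    have hterm : ∀ k ∈ Finset.range K,
        ((RatFunc.coeAlgHom A) (RatFunc.C (d (N + k)) * RatFunc.X ^ ((N + (k : ℤ)) : ℤ))).coeff n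
          = if n = N + (k : ℤ) then d (N + k) else 0 := by
      intro k _
      rw [← RatFunc.coe_def, RFDD.coe_single, HahnSeries.coeff_single]
      by_cases h : n = N + (k : ℤ) <;> simp [h]
    rw [Finset.sum_congr rfl hterm]
    by_cases hcase : N ≤ n ∧ n ≤ M
    · rw [Finset.sum_eq_single ((n - N).toNat)]
      · rw [if_pos (by omega), show N + ((n - N).toNat : ℤ) = n by omega]
      · intro b _ hb
        rw [if_neg]
        intro hh
        exact hb (by omega)
      · intro habs
        exact absurd (Finset.mem_range.2 (by omega)) habs
    · rw [Finset.sum_eq_zero fun k hk => ?_]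
      · rcases not_and_or.mp hcase with h | h
        · exact (hdlow n (by omega)).symm
        · exact (hdhigh n (by omega)).symm
      · rw [Finset.mem_range] at hk
        rw [if_neg]
        intro hh
        exact hcase ⟨by omega, by omega⟩
  -- coefficients of P at ∞
  have hPinf : ∀ n : ℤ, ((RFDD.Φ P : RatFunc A) : LaurentSeries A).coeff n = d (-n) := by
    intro n
    rw [hP, map_sum, RatFunc.coe_def, map_sum, RFDD.laurent_coeff_sum]
    have hterm : ∀ k ∈ Finset.range K,
        ((RatFunc.coeAlgHom A) (RFDD.Φ (RatFunc.C (d (N + k)) *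
            RatFunc.X ^ ((N + (k : ℤ)) : ℤ)))).coeff n
          = if n = -(N + (k : ℤ)) then d (N + k) else 0 := by
      intro k _
      rw [map_mul, RFDD.Φ_C, map_zpow₀, RFDD.Φ_X, inv_zpow, ← zpow_neg, ← RatFunc.coe_def,
        RFDD.coe_single, HahnSeries.coeff_single]
      by_cases h : n = -(N + (k : ℤ)) <;> simp [h]
    rw [Finset.sum_congr rfl hterm]
    by_cases hcase : N ≤ -n ∧ -n ≤ M
    · rw [Finset.sum_eq_single ((-n - N).toNat)]
      · rw [if_pos (by omega), show N + (((-n) - N).toNat : ℤ) = -n by omega]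
      · intro b _ hb
        rw [if_neg]
        intro hh
        exact hb (by omega)
      · intro habs
        exact absurd (Finset.mem_range.2 (by omega)) habs
    · rw [Finset.sum_eq_zero fun k hk => ?_]
      · rcases not_and_or.mp hcase with h | h
        · exact (hdlow (-n) (by omega)).symm
        · exact (hdhigh (-n) (by omega)).symm
      · rw [Finset.mem_range] at hk
        rw [if_neg]
        intro hh
        exact hcase ⟨by omega, by omega⟩
  refine ⟨H + P, ?_, ?_, ?_⟩
  · -- pole condition
    set Q : RatFunc A := ∏ i, (RatFunc.X - RatFunc.C (a i)) ^ nmul i with hQ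
    set Qp : A[X] := ∏ i, (Polynomial.X - Polynomial.C (a i)) ^ nmul i with hQp
    have hQalg : Q = algebraMap A[X] (RatFunc A) Qp := by
      rw [hQ, hQp, map_prod]
      refine Finset.prod_congr rfl fun i _ => ?_
      rw [map_pow, map_sub, RatFunc.algebraMap_X, RatFunc.algebraMap_C]
    have hHQ : H * Q ∈ (algebraMap A[X] (RatFunc A)).range := by
      rw [hH, Finset.sum_mul]
      apply sum_mem
      intro i _
      rw [Finset.sum_mul]
      apply sum_mem
      intro ν hν
      rw [Finset.mem_range] at hν
      have hdvd : (Polynomial.C (a i) - Polynomial.X) ^ (ν + 1) ∣ Qp := by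
        refine dvd_trans ?_ (dvd_trans
          (pow_dvd_pow (Polynomial.X - Polynomial.C (a i)) (by omega : ν + 1 ≤ nmul i))
          (Finset.dvd_prod_of_mem (fun i => (Polynomial.X - Polynomial.C (a i)) ^ nmul i)
            (Finset.mem_univ i)))
        refine ⟨(-1 : A[X]) ^ (ν + 1), ?_⟩
        rw [show Polynomial.X - Polynomial.C (a i) = -(Polynomial.C (a i) - Polynomial.X) from
          (neg_sub _ _).symm, neg_pow]
        ring
      obtain ⟨q', hq'⟩ := hdvd
      refine RingHom.mem_range.2 ⟨Polynomial.C (w i ν) * q', ?_⟩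
      rw [map_mul, RatFunc.algebraMap_C, hQalg, hq',
        map_mul (algebraMap A[X] (RatFunc A)) ((Polynomial.C (a i) - Polynomial.X) ^ (ν + 1)) q']
      have hpowalg : algebraMap A[X] (RatFunc A) ((Polynomial.C (a i) - Polynomial.X) ^ (ν + 1))
          = (RatFunc.C (a i) - RatFunc.X) ^ (ν + 1) := by
        rw [map_pow, map_sub, RatFunc.algebraMap_X, RatFunc.algebraMap_C]
      rw [hpowalg, mul_assoc, inv_mul_cancel_left₀ (pow_ne_zero _ (RFDD.CX_ne_zero (a i)))]
    obtain ⟨q, hq⟩ := RingHom.mem_range.1 hHQ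
    set mN : ℕ := (-N).toNat with hmN
    set p₂ : A[X] := ∑ k ∈ Finset.range K, Polynomial.C (d (N + k)) * Polynomial.X ^ k * Qp
      with hp₂
    have hXm : (RatFunc.X : RatFunc A) ^ mN ≠ 0 := pow_ne_zero _ RatFunc.X_ne_zero
    have hPQ : P * Q = (RatFunc.X ^ mN)⁻¹ * algebraMap A[X] (RatFunc A) p₂ := by
      rw [hP, hp₂, Finset.sum_mul, map_sum, Finset.mul_sum]
      refine Finset.sum_congr rfl fun k _ => ?_
      rw [map_mul, map_mul, RatFunc.algebraMap_C, map_pow, RatFunc.algebraMap_X, ← hQalg]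
      have hz : (RatFunc.X : RatFunc A) ^ ((N + (k : ℤ)) : ℤ)
          = (RatFunc.X ^ mN)⁻¹ * RatFunc.X ^ k := by
        rw [show (N + (k : ℤ)) = -(mN : ℤ) + (k : ℤ) by omega, zpow_add₀ RatFunc.X_ne_zero,
          zpow_neg, zpow_natCast, zpow_natCast]
      rw [hz]
      ring
    refine ⟨q * Polynomial.X ^ mN + p₂, mN, ?_⟩
    rw [add_mul, ← hq, hPQ, map_add, map_mul, map_pow, RatFunc.algebraMap_X]
    rw [eq_div_iff hXm, add_mul, mul_comm ((RatFunc.X ^ mN)⁻¹) _, mul_assoc,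
      inv_mul_cancel₀ hXm, mul_one]
  · -- expansion at 0
    intro n
    rw [RatFunc.coe_add, HahnSeries.coeff_add, hH0 n, hPcoe n, hd]
    simp only
    ring
  · -- expansion at ∞
    intro n
    rw [RFDD.Φ_eq_eval, map_add, RatFunc.coe_add, HahnSeries.coeff_add, hHinf n, hPinf n,
      hd2 (-n), neg_neg]
    ring
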